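/- Let α = (√5 - 1)/2, g(x) = log(2 - 2cos(2πx)), S_k(α) = ∑_{j=1}^{k} g(jα), and let F_n be the Fibonacci numbers. If the sequence S_{F_n - 1}(α) − 2 log F_n converges to a limit L as n → ∞, then S_{F_n}(α) converges to log(4π²/5) + L. -/

import Mathlib

open Real Finset Filter goldenRatio

private lemma aux_sq' (d u : ℝ) (ha : d ^ 2 = 1) : (d - u) ^ 2 = (1 - d * u) ^ 2 := by
  linear_combination (1 - u ^ 2) * ha

private lemma aux_ft' (s a b c d F : ℝ) (hs : s ≠ 0) (hF : F = (a - b) / s)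
    (e1 : a * b = d) (e2 : b * b = c) : F * b = (d - c) / s := by
  subst hF
  field_simp
  linear_combination e1 - e2

private lemma aux_eval' (x s F : ℝ) (hx : x ≠ 0) :
    4 * s ^ 2 * F ^ 2 = 4 * (F * x) ^ 2 * (s / x) ^ 2 := by
  field_simp

/-- For the golden mean `α`, `g x = log (2 - 2 cos (2π x))`, Birkhoff sums
`S k = ∑_{j=1}^{k} g (j α)` and the Fibonacci numbers `F n`: if
`S (F n - 1) - 2 log (F n) → L`, then `S (F n) → log (4π²/5) + L`. -/
theorem birkhoff_sum_fib_limit_of_sub_one_limit (α : ℝ) (hα : α = (Real.sqrt 5 - 1) / 2)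
    (g : ℝ → ℝ) (hg : ∀ x, g x = Real.log (2 - 2 * Real.cos (2 * Real.pi * x)))
    (S : ℕ → ℝ) (hS : ∀ k, S k = ∑ j ∈ Finset.Icc 1 k, g (j * α))
    (L : ℝ)
    (hL : Tendsto (fun n : ℕ => S (Nat.fib n - 1) - 2 * Real.log (Nat.fib n)) atTop (nhds L)) :
    Tendsto (fun n : ℕ => S (Nat.fib n)) atTop (nhds (Real.log (4 * Real.pi ^ 2 / 5) + L)) := by
  have hψ : α = -ψ := by rw [hα, goldenConj]; ring
  -- key identity: fib (n+1) * α = fib n - ψ^(n+1)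
  have key : ∀ n : ℕ, ((Nat.fib (n+1) : ℝ) * α = (Nat.fib n : ℝ) - ψ ^ (n+1)) ∧
      ((Nat.fib (n+2) : ℝ) * α = (Nat.fib (n+1) : ℝ) - ψ ^ (n+2)) := by
    intro n
    induction n with
    | zero =>
      constructor
      · simp [hψ]
      · have : ψ ^ 2 = ψ + 1 := goldenConj_sq
        simp [hψ, this]
    | succ k ih =>
      refine ⟨ih.2, ?_⟩
      have hfib : (Nat.fib (k+3) : ℝ) = (Nat.fib (k+2) : ℝ) + (Nat.fib (k+1) : ℝ) := by
        rw [show k + 3 = (k+1) + 2 by ring, Nat.fib_add_two]; push_cast; ring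
      have hfib2 : (Nat.fib (k+2) : ℝ) = (Nat.fib (k+1) : ℝ) + (Nat.fib k : ℝ) := by
        rw [Nat.fib_add_two]; push_cast; ring
      have hψ2 : ψ ^ 2 = ψ + 1 := goldenConj_sq
      have h1 := ih.1
      have h2 := ih.2
      rw [hfib, add_mul, h1, h2, hfib2]
      have : ψ ^ (k+3) = ψ ^ (k+2) + ψ ^ (k+1) := by
        have : ψ ^ (k+3) = ψ ^ (k+1) * ψ ^ 2 := by ring
        rw [this, hψ2]; ring
      rw [this]; ring
  have h5pos : (0:ℝ) < Real.sqrt 5 := Real.sqrt_pos.mpr (by norm_num)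
  have h5ne : Real.sqrt 5 ≠ 0 := ne_of_gt h5pos
  have h5sq : Real.sqrt 5 * Real.sqrt 5 = 5 := Real.mul_self_sqrt (by norm_num)
  have hψabs : |ψ| < 1 := by
    rw [abs_lt]; exact ⟨neg_one_lt_goldenConj, by linarith [goldenConj_neg]⟩
  have hψne : ψ ≠ 0 := goldenConj_ne_zero
  -- Binet-based: fib (n+1) * ψ^(n+1)
  have hFt : ∀ n : ℕ, (Nat.fib (n+1) : ℝ) * ψ ^ (n+1)
      = ((-1:ℝ)^(n+1) - (ψ^2)^(n+1)) / Real.sqrt 5 := by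
    intro n
    have e1 : φ ^ (n+1) * ψ ^ (n+1) = (-1:ℝ)^(n+1) := by
      rw [← mul_pow, goldenRatio_mul_goldenConj]
    have e2 : ψ ^ (n+1) * ψ ^ (n+1) = (ψ^2)^(n+1) := by
      rw [← mul_pow, sq]
    exact aux_ft' _ _ _ _ _ _ h5ne (Real.coe_fib_eq (n+1)) e1 e2
  -- limit of (ψ²)^(n+1)
  have hψsqlt : ψ^2 < 1 := by nlinarith [abs_nonneg ψ, abs_lt.mp hψabs, sq_abs ψ]
  have hψsqnn : (0:ℝ) ≤ ψ^2 := sq_nonneg ψ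
  have hu : Tendsto (fun n : ℕ => (ψ^2)^(n+1)) atTop (nhds 0) := by
    have := tendsto_pow_atTop_nhds_zero_of_lt_one hψsqnn hψsqlt
    exact this.comp (tendsto_add_atTop_nat 1)
  have hv : Tendsto (fun n : ℕ => (-1:ℝ)^(n+1) * (ψ^2)^(n+1)) atTop (nhds 0) := by
    refine squeeze_zero_norm (a := fun n : ℕ => (ψ^2)^(n+1)) (fun n => ?_) hu
    rw [norm_mul, norm_pow, norm_neg, norm_one, one_pow, one_mul]
    rw [Real.norm_eq_abs, abs_of_nonneg (pow_nonneg hψsqnn _)]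
  have hsq : Tendsto (fun n : ℕ => ((-1:ℝ)^(n+1) - (ψ^2)^(n+1))^2) atTop (nhds 1) := by
    have h1 : Tendsto (fun n : ℕ => (1 - (-1:ℝ)^(n+1) * (ψ^2)^(n+1))^2) atTop (nhds 1) := by
      have := ((tendsto_const_nhds (x := (1:ℝ))).sub hv).pow 2
      simpa using this
    refine h1.congr fun n => ?_
    have ha : ((-1:ℝ)^(n+1))^2 = 1 := by
      rw [← pow_mul, mul_comm, pow_mul]; norm_num
    exact (aux_sq' _ _ ha).symm
  -- limit of sin(π t)/t as t → 0
  have hslope : Tendsto (fun t : ℝ => Real.sin (π * t) / t) (nhdsWithin 0 {(0:ℝ)}ᶜ) (nhds π) := by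
    have hd : HasDerivAt (fun t : ℝ => Real.sin (π * t)) π 0 := by
      have h1 : HasDerivAt (fun t : ℝ => π * t) π 0 := by
        simpa using (hasDerivAt_id (0:ℝ)).const_mul π
      have := (Real.hasDerivAt_sin (π * 0)).comp 0 h1
      simp only [mul_zero, Real.cos_zero, one_mul] at this
      exact this
    have := hasDerivAt_iff_tendsto_slope.mp hd
    refine this.congr fun t => ?_
    simp [slope_def_field]
  have hx : Tendsto (fun n : ℕ => ψ ^ (n+1)) atTop (nhdsWithin 0 {(0:ℝ)}ᶜ) := by
    apply tendsto_nhdsWithin_of_tendsto_nhds_of_eventually_within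
    · exact (tendsto_pow_atTop_nhds_zero_of_abs_lt_one hψabs).comp (tendsto_add_atTop_nat 1)
    · exact Eventually.of_forall fun n => pow_ne_zero _ hψne
  have hsin : Tendsto (fun n : ℕ => (Real.sin (π * ψ^(n+1)) / ψ^(n+1))^2) atTop
      (nhds (π^2)) := (hslope.comp hx).pow 2
  -- fib(n+1)^2 * ψ^(2(n+1)) limit
  have hFsq : Tendsto (fun n : ℕ => ((Nat.fib (n+1) : ℝ) * ψ ^ (n+1))^2) atTop (nhds (1/5)) := by
    have heq : ∀ n : ℕ, ((Nat.fib (n+1) : ℝ) * ψ ^ (n+1))^2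
        = ((-1:ℝ)^(n+1) - (ψ^2)^(n+1))^2 / 5 := by
      intro n
      rw [hFt n, div_pow]
      rw [show (Real.sqrt 5)^2 = 5 from Real.sq_sqrt (by norm_num)]
    have h' : Tendsto (fun n : ℕ => ((-1:ℝ)^(n+1) - (ψ^2)^(n+1))^2 / 5) atTop (nhds (1/5)) := by
      simpa using hsq.div_const 5
    exact h'.congr fun n => (heq n).symm
  -- cosine reduction and positivity facts
  have hcos : ∀ n : ℕ, Real.cos (2 * π * ((Nat.fib (n+1) : ℝ) * α))
      = Real.cos (2 * π * ψ ^ (n+1)) := by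
    intro n
    have : 2 * π * ((Nat.fib (n+1) : ℝ) * α)
        = ((Nat.fib n : ℤ) : ℝ) * (2 * π) - 2 * π * ψ ^ (n+1) := by
      rw [(key n).1]; push_cast; ring
    rw [this, Real.cos_int_mul_two_pi_sub]
  have hsinpos : ∀ n : ℕ, Real.sin (π * ψ ^ (n+1)) ≠ 0 := by
    intro n
    have habs : |ψ ^ (n+1)| < 1 := by
      rw [abs_pow]
      calc |ψ| ^ (n+1) ≤ |ψ| ^ 1 := by
            apply pow_le_pow_of_le_one (abs_nonneg _) hψabs.le (by omega)
        _ < 1 := by simpa using hψabs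
    have hne : π * ψ ^ (n+1) ≠ 0 := mul_ne_zero Real.pi_ne_zero (pow_ne_zero _ hψne)
    have h1 : -π < π * ψ ^ (n+1) := by
      nlinarith [Real.pi_pos, abs_lt.mp habs]
    have h2 : π * ψ ^ (n+1) < π := by
      nlinarith [Real.pi_pos, abs_lt.mp habs]
    intro h
    exact hne ((Real.sin_eq_zero_iff_of_lt_of_lt h1 h2).mp h)
  have hcos4 : ∀ n : ℕ, 2 - 2 * Real.cos (2 * π * ψ ^ (n+1))
      = 4 * Real.sin (π * ψ ^ (n+1))^2 := by
    intro n
    have h2 : 2 * π * ψ ^ (n+1) = 2 * (π * ψ ^ (n+1)) := by ring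
    rw [h2, Real.cos_two_mul]
    have := Real.sin_sq_add_cos_sq (π * ψ ^ (n+1))
    linarith [this]
  -- main limit for the term
  have hEval : ∀ n : ℕ, (2 - 2 * Real.cos (2 * π * ((Nat.fib (n+1) : ℝ) * α)))
      * (Nat.fib (n+1) : ℝ)^2
      = 4 * ((Nat.fib (n+1) : ℝ) * ψ ^ (n+1))^2 * (Real.sin (π * ψ^(n+1)) / ψ^(n+1))^2 := by
    intro n
    rw [hcos n, hcos4 n]
    exact aux_eval' _ _ _ (pow_ne_zero _ hψne)
  have hE : Tendsto (fun n : ℕ => (2 - 2 * Real.cos (2 * π * ((Nat.fib (n+1) : ℝ) * α)))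
      * (Nat.fib (n+1) : ℝ)^2) atTop (nhds (4 * π^2 / 5)) := by
    have := ((tendsto_const_nhds (x := (4:ℝ))).mul hFsq).mul hsin
    have h45 : (4:ℝ) * (1/5) * π^2 = 4 * π^2 / 5 := by ring
    rw [h45] at this
    exact this.congr fun n => (hEval n).symm
  -- take log
  have h45pos : (0:ℝ) < 4 * π^2 / 5 := by positivity
  have hT1 : Tendsto (fun n : ℕ => g ((Nat.fib (n+1) : ℝ) * α)
      + 2 * Real.log (Nat.fib (n+1))) atTop (nhds (Real.log (4 * π^2 / 5))) := by
    have hlog := (Real.continuousAt_log (ne_of_gt h45pos)).tendsto.comp hE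
    refine hlog.congr fun n => ?_
    have hfpos : (0:ℝ) < (Nat.fib (n+1) : ℝ) := by
      exact_mod_cast Nat.fib_pos.mpr (Nat.succ_pos n)
    have hapos : 0 < 2 - 2 * Real.cos (2 * π * ((Nat.fib (n+1) : ℝ) * α)) := by
      rw [hcos n, hcos4 n]
      have := hsinpos n
      positivity
    show Real.log _ = _
    rw [Real.log_mul (ne_of_gt hapos) (by positivity), Real.log_pow, hg]
    push_cast
    ring
  have hT : Tendsto (fun n : ℕ => g ((Nat.fib n : ℝ) * α) + 2 * Real.log (Nat.fib n)) atTop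
      (nhds (Real.log (4 * π^2 / 5))) := by
    exact (tendsto_add_atTop_iff_nat 1).mp hT1
  -- assemble
  have hsum := hL.add hT
  rw [add_comm]
  refine Tendsto.congr' ?_ hsum
  filter_upwards [eventually_ge_atTop 1] with n hn
  have hm : 1 ≤ Nat.fib n := Nat.fib_pos.mpr (by omega)
  obtain ⟨m, hmeq⟩ : ∃ m, Nat.fib n = m + 1 := ⟨Nat.fib n - 1, by omega⟩
  have hsplit : S (Nat.fib n) = S (Nat.fib n - 1) + g ((Nat.fib n : ℝ) * α) := by
    rw [hS, hS, hmeq]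
    simp only [Nat.add_sub_cancel]
    rw [Finset.sum_Icc_succ_top (by omega) (fun j => g (j * α))]
  linear_combination -hsplit
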